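/- arXiv:2202.09416 — 2 statements merged into one kernel-verified Lean document; each statement's English description precedes it below -/
import Mathlib

section
/- Let p be an odd prime and suppose L_p is embedded in a harmonic matroid M. Then for all i,j ∈ Z_p and all k ∈ Z_p with k ≠ 0, the set ⟨j,-1,i⟩ ∪ ⟨1,0,k^{-1}⟩ has rank 3 in M. -/
open Set

namespace HarmonicPaper

variable {α : Type*}

/-- Extended rank of a set in a matroid: supremum of cardinalities of independent subsets. -/
noncomputable def eRk (M : Matroid α) (S : Set α) : ℕ∞ :=
  ⨆ I ∈ {I : Set α | M.Indep I ∧ I ⊆ S}, I.encard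

/-- A set of points is collinear if it has rank at most 2. -/
def Collin (M : Matroid α) (S : Set α) : Prop := eRk M S ≤ 2

/-- The six collinear triples of the non-Fano configuration on `y,x,z,o,q,r,s`. -/
def nonFanoLines (y x z o q r s : α) : Set (Set α) :=
  {{y, x, z}, {y, o, q}, {y, r, s}, {z, o, s}, {z, q, r}, {x, q, s}}

/-- `HP M y x z o q r s` : the restriction of `M` to the seven pairwise distinct points
`y,x,z,o,q,r,s` is a simple rank-3 matroid whose collinear triples are exactly those of the
non-Fano matroid `F₇⁻`, or exactly those together with `{x,o,r}` (the Fano matroid `F₇`). -/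
def HP (M : Matroid α) (y x z o q r s : α) : Prop :=
  List.Pairwise (· ≠ ·) [y, x, z, o, q, r, s] ∧
  ({y, x, z, o, q, r, s} : Set α) ⊆ M.E ∧
  eRk M {y, x, z, o, q, r, s} = 3 ∧
  (∀ a ∈ ({y, x, z, o, q, r, s} : Set α), ∀ b ∈ ({y, x, z, o, q, r, s} : Set α),
    a ≠ b → eRk M {a, b} = 2) ∧
  ((∀ a ∈ ({y, x, z, o, q, r, s} : Set α), ∀ b ∈ ({y, x, z, o, q, r, s} : Set α),
      ∀ c ∈ ({y, x, z, o, q, r, s} : Set α), a ≠ b → a ≠ c → b ≠ c →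
      (Collin M {a, b, c} ↔ ({a, b, c} : Set α) ∈ nonFanoLines y x z o q r s)) ∨
   (∀ a ∈ ({y, x, z, o, q, r, s} : Set α), ∀ b ∈ ({y, x, z, o, q, r, s} : Set α),
      ∀ c ∈ ({y, x, z, o, q, r, s} : Set α), a ≠ b → a ≠ c → b ≠ c →
      (Collin M {a, b, c} ↔
        ({a, b, c} : Set α) ∈ insert {x, o, r} (nonFanoLines y x z o q r s))))

/-- `Hc M y z x x'` : `x'` is a harmonic conjugate of `x` with respect to `y` and `z`. -/
def Hc (M : Matroid α) (y z x x' : α) : Prop :=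
  ∃ o q r s, HP M y x z o q r s ∧ M.closure {y, z} ∩ M.closure {o, r} = {x'}

/-- A matroid is harmonic if every harmonic configuration `HP` yields a (unique) harmonic
conjugate, which moreover depends only on `x, y, z` and not on the choice of `o,q,r,s`. -/
def IsHarmonic (M : Matroid α) : Prop :=
  (∀ y x z o q r s, HP M y x z o q r s →
    ∃ x', M.closure {y, z} ∩ M.closure {o, r} = {x'}) ∧
  (∀ y x z o q r s o' q' r' s', HP M y x z o q r s → HP M y x z o' q' r' s' →
    M.closure {y, z} ∩ M.closure {o, r} = M.closure {y, z} ∩ M.closure {o', r'})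

/-- One step of harmonic closure. -/
def hStep (M : Matroid α) (S : Set α) : Set α :=
  S ∪ {x | ∃ a ∈ S, ∃ b ∈ S, ∃ c ∈ S, Hc M a c b x}

/-- Iterated harmonic closure steps. -/
def hIter (M : Matroid α) : ℕ → Set α → Set α
  | 0, S => S
  | n + 1, S => hStep M (hIter M n S)

/-- The harmonic closure `h^∞(S)`. -/
def hCl (M : Matroid α) (S : Set α) : Set α := ⋃ n, hIter M n S

end HarmonicPaper
namespace HarmonicPaper

variable {α : Type*}

/-- The points of the matroid `L_p`: `A i = [0,i,1]`, `B i = [1,i,1]`, `C i = [1,i,0]`,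
and `V = [0,1,0]`. -/
inductive LpPoint (p : ℕ) : Type
  | A : ZMod p → LpPoint p
  | B : ZMod p → LpPoint p
  | C : ZMod p → LpPoint p
  | V : LpPoint p

open LpPoint

/-- The lines (maximal collinear sets of size ≥ 3) of `L_p`:
`⟨1,0,0⟩_p`, `⟨1,0,-1⟩_p`, `⟨0,0,1⟩_p`, and `⟨j,-1,i⟩_p = {[0,i,1],[1,i+j,1],[1,j,0]}`. -/
def LpLines (p : ℕ) : Set (Set (LpPoint p)) :=
  {S | S = {x | ∃ i, x = A i} ∪ {V} ∨ S = {x | ∃ i, x = B i} ∪ {V} ∨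
       S = {x | ∃ i, x = C i} ∪ {V} ∨ ∃ i j, S = {A i, B (i + j), C j}}

/-- Independence in the rank-3 simple matroid `L_p`: any set of at most two points is
independent, and a three-point set is independent iff it lies on no line. -/
def LpIndep (p : ℕ) (S : Set (LpPoint p)) : Prop :=
  S.encard ≤ 2 ∨ (S.encard = 3 ∧ ∀ L ∈ LpLines p, ¬ S ⊆ L)

/-- An embedding of `L_p` in the matroid `M`: an injection of the ground set of `L_p` into
the points of `M` under which independence is preserved and reflected. -/
def IsLpEmbedding (p : ℕ) (M : Matroid α) (f : LpPoint p → α) : Prop :=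
  Function.Injective f ∧ Set.range f ⊆ M.E ∧
  ∀ S : Set (LpPoint p), LpIndep p S ↔ M.Indep (f '' S)

/-- `⟨j,-1,i⟩ := h^∞(⟨j,-1,i⟩_p)`, the harmonic closure in `M` of the line
`{[0,i,1], [1,i+j,1], [1,j,0]}` of `L_p`. -/
def lineJI {p : ℕ} (M : Matroid α) (f : LpPoint p → α) (j i : ZMod p) : Set α :=
  hCl M (f '' {A i, B (i + j), C j})

/-- The family of points `[1,s,-k]` (`g s k` denotes `[1,s,-k]`) produced by the key lemma:
it agrees with the like-named points `[1,s,0]` and `[1,s,1]` of `L_p` and satisfies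
properties (i) and (ii) of the key lemma. -/
def IsKeyFamily {p : ℕ} (M : Matroid α) (f : LpPoint p → α)
    (g : ZMod p → ZMod p → α) : Prop :=
  (∀ s, g s 0 = f (C s)) ∧ (∀ s, g s (-1) = f (B s)) ∧
  (∀ k i j : ZMod p, (⋂ t : ZMod p, lineJI M f (j + k * t) (i + t)) = {g (j - k * i) k}) ∧
  (∀ k i j t : ZMod p, Collin M {f (A (i + t)), f (C (j + k * t)), g (j - k * i) k})

/-- `C(j,i) = {[0,i,1]} ∪ {[1,j-ki,-k] : k ∈ Z_p}`. -/
def cSet {p : ℕ} (f : LpPoint p → α) (g : ZMod p → ZMod p → α) (j i : ZMod p) : Set α :=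
  insert (f (A i)) {x | ∃ k : ZMod p, x = g (j - k * i) k}

/-- The point set `P = {[1,s,-k]} ∪ {[0,i,1]} ∪ {[0,1,0]}`. -/
def pSet {p : ℕ} (f : LpPoint p → α) (g : ZMod p → ZMod p → α) : Set α :=
  {x | ∃ s k, x = g s k} ∪ {x | ∃ i, x = f (A i)} ∪ {f V}

/-- The line family `𝓛₁ = {⟨0,0,1⟩} ∪ {⟨1,0,k⟩ : k ∈ Z_p}`, where
`⟨0,0,1⟩ = {[1,t,0] : t} ∪ {[0,1,0]}`, `⟨1,0,0⟩ = {[0,t,1] : t} ∪ {[0,1,0]}` and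
`⟨1,0,k⟩ = {[1,t,-k⁻¹] : t} ∪ {[0,1,0]}` for `k ≠ 0`. -/
def lFam1 {p : ℕ} [Fact p.Prime] (f : LpPoint p → α) (g : ZMod p → ZMod p → α) :
    Set (Set α) :=
  {S | S = {x | ∃ t, x = f (C t)} ∪ {f V} ∨
       S = {x | ∃ t, x = f (A t)} ∪ {f V} ∨
       ∃ k : ZMod p, k ≠ 0 ∧ S = {x | ∃ t, x = g t k⁻¹} ∪ {f V}}

/-- The line family `𝓛₂ = {C(j,i) : i,j ∈ Z_p}`. -/
def lFam2 {p : ℕ} (f : LpPoint p → α) (g : ZMod p → ZMod p → α) : Set (Set α) :=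
  {S | ∃ i j : ZMod p, S = cSet f g j i}

/-- The line set `𝓛 = 𝓛₁ ∪ 𝓛₂`. -/
def lFam {p : ℕ} [Fact p.Prime] (f : LpPoint p → α) (g : ZMod p → ZMod p → α) :
    Set (Set α) :=
  lFam1 f g ∪ lFam2 f g

end HarmonicPaper

namespace HarmonicPaper
open LpPoint

section AuxLemmas

variable {M : Matroid α}

lemma le_eRk_of_indep {I S : Set α} (hI : M.Indep I) (hIS : I ⊆ S) :
    I.encard ≤ eRk M S := by
  have hmem : I ∈ {J : Set α | M.Indep J ∧ J ⊆ S} := ⟨hI, hIS⟩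
  unfold eRk
  exact le_iSup₂ (f := fun (J : Set α) (_ : J ∈ {J : Set α | M.Indep J ∧ J ⊆ S}) =>
    J.encard) I hmem

lemma eRk_le_iff' {S : Set α} {n : ℕ∞} :
    eRk M S ≤ n ↔ ∀ I, M.Indep I → I ⊆ S → I.encard ≤ n := by
  constructor
  · exact fun h I hI hIS => (le_eRk_of_indep hI hIS).trans h
  · intro h
    unfold eRk
    exact iSup₂_le fun I hI => h I hI.1 hI.2

lemma encard_le_of_indep_subset_closure {I J : Set α} (hI : M.Indep I) (hJ : M.Indep J)
    (hIJ : I ⊆ M.closure J) : I.encard ≤ J.encard := by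
  by_contra h
  push_neg at h
  obtain ⟨e, he, hins⟩ := hJ.augment hI h
  rcases (hJ.mem_closure_iff).mp (hIJ he.1) with hdep | heJ
  · exact hdep.not_indep hins
  · exact he.2 heJ

lemma eRk_le_of_subset_closure {S W : Set α} (hW : W ⊆ M.E) (hS : S ⊆ M.closure W) :
    eRk M S ≤ W.encard := by
  obtain ⟨J, hJ⟩ := M.exists_isBasis W hW
  rw [eRk_le_iff']
  intro I hI hIS
  have hIJ : I ⊆ M.closure J := by
    rw [hJ.closure_eq_closure]; exact hIS.trans hS
  exact (encard_le_of_indep_subset_closure hI hJ.indep hIJ).trans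
    (Set.encard_mono hJ.subset)

lemma subset_hCl (M : Matroid α) (S : Set α) : S ⊆ hCl M S :=
  fun x hx => mem_iUnion.2 ⟨0, hx⟩

lemma hCl_subset_closure (M : Matroid α) {S : Set α} (hS : S ⊆ M.E) :
    hCl M S ⊆ M.closure S := by
  refine iUnion_subset fun n => ?_
  induction n with
  | zero => exact M.subset_closure S hS
  | succ n ih =>
    intro x hx
    rw [show hIter M (n + 1) S = hStep M (hIter M n S) from rfl, hStep] at hx
    rcases hx with hx | hx
    · exact ih hx
    · obtain ⟨a, ha, b, hb, c, hc, o, q, r, s, _, heq⟩ := hx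
      have hx' : x ∈ M.closure {a, c} := by
        have hxx : x ∈ ({x} : Set α) := rfl
        rw [← heq] at hxx
        exact hxx.1
      have hac : ({a, c} : Set α) ⊆ M.closure S := by
        rintro y (rfl | rfl)
        · exact ih ha
        · exact ih hc
      exact M.closure_subset_closure_of_subset_closure hac hx'

lemma mem_closure_of_dep_triple {a b c : α} (hab : M.Indep {a, b})
    (hdep : M.Dep {a, b, c}) : c ∈ M.closure {a, b} := by
  rw [hab.mem_closure_iff]
  by_cases hc : c ∈ ({a, b} : Set α)
  · exact Or.inr hc
  · left
    have hins : insert c ({a, b} : Set α) = {a, b, c} := by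
      ext x; simp; tauto
    rwa [hins]

lemma mem_closure_of_collin {a b c : α} (hab : a ≠ b) (hiab : M.Indep {a, b})
    (hcE : c ∈ M.E) (hcol : Collin M {a, b, c}) : c ∈ M.closure {a, b} := by
  by_cases hc : c ∈ ({a, b} : Set α)
  · exact M.mem_closure_of_mem hc hiab.subset_ground
  rw [hiab.mem_closure_iff]
  left
  rw [Matroid.dep_iff]
  refine ⟨fun hind => ?_, Set.insert_subset hcE hiab.subset_ground⟩
  have h3 : (insert c ({a, b} : Set α)).encard = 3 := by
    rw [Set.encard_insert_of_notMem hc, Set.encard_pair hab]; rfl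
  have hss : insert c ({a, b} : Set α) ⊆ {a, b, c} := by
    intro x hx; simp at hx ⊢; tauto
  have hle := (le_eRk_of_indep hind hss).trans hcol
  rw [h3] at hle
  norm_num at hle

end AuxLemmas

theorem statement_7 {α : Type*} (p : ℕ) [Fact p.Prime] (hodd : p ≠ 2)
    (M : Matroid α) (hM : IsHarmonic M) (f : LpPoint p → α) (hf : IsLpEmbedding p M f)
    (g : ZMod p → ZMod p → α) (hg : IsKeyFamily M f g) :
    ∀ i j k : ZMod p, k ≠ 0 →
      eRk M (lineJI M f j i ∪ ({x | ∃ t : ZMod p, x = g t k} ∪ {f V})) = 3 := by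
  intro i j k hk
  have hfE : ∀ u : LpPoint p, f u ∈ M.E := fun u => hf.2.1 ⟨u, rfl⟩
  have pairIndep : ∀ u v : LpPoint p, u ≠ v → M.Indep {f u, f v} := by
    intro u v huv
    have hLp : LpIndep p {u, v} := Or.inl (by rw [Set.encard_pair huv])
    have himg := (hf.2.2 _).mp hLp
    rwa [Set.image_insert_eq, Set.image_singleton] at himg
  have depTriple : ∀ u v w : LpPoint p, u ≠ v → u ≠ w → v ≠ w →
      (∃ L ∈ LpLines p, ({u, v, w} : Set (LpPoint p)) ⊆ L) →
      M.Dep {f u, f v, f w} := by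
    rintro u v w huv huw hvw ⟨L, hL, hsub⟩
    rw [Matroid.dep_iff]
    constructor
    · intro hind
      have himg : M.Indep (f '' {u, v, w}) := by
        rwa [Set.image_insert_eq, Set.image_insert_eq, Set.image_singleton]
      rcases (hf.2.2 _).mpr himg with h2 | ⟨_, hno⟩
      · have h3 : ({u, v, w} : Set (LpPoint p)).encard = 3 := by
          rw [Set.encard_insert_of_notMem (by simp [huv, huw]), Set.encard_pair hvw]
          rfl
        rw [h3] at h2
        norm_num at h2
      · exact hno L hL hsub
    · rintro x (rfl | rfl | rfl) <;> exact hfE _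
  have clW_trans : ∀ (x a b : α) (W : Set α), a ∈ M.closure W → b ∈ M.closure W →
      x ∈ M.closure {a, b} → x ∈ M.closure W := by
    intro x a b W ha hb hx
    refine M.closure_subset_closure_of_subset_closure ?_ hx
    rintro y (rfl | rfl)
    exacts [ha, hb]
  set W : Set α := {f (A 0), f (C 0), f V} with hWdef
  have hWE : W ⊆ M.E := by
    rintro x (rfl | rfl | rfl) <;> exact hfE _
  have hV : f V ∈ M.closure W :=
    M.mem_closure_of_mem (by simp [hWdef]) hWE
  have hA : ∀ t : ZMod p, f (A t) ∈ M.closure W := by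
    intro t
    by_cases ht : t = 0
    · subst ht
      exact M.mem_closure_of_mem (by simp [hWdef]) hWE
    · have hpair : M.Indep {f (A 0), f V} :=
        pairIndep _ _ (fun h => by cases h)
      have hdep : M.Dep {f (A 0), f V, f (A t)} := by
        refine depTriple _ _ _ (fun h => by cases h)
          (fun h => ht (LpPoint.A.inj h).symm) (fun h => by cases h)
          ⟨{x | ∃ i, x = A i} ∪ {V}, Or.inl rfl, ?_⟩
        rintro x (rfl | rfl | rfl)
        · exact Or.inl ⟨0, rfl⟩
        · exact Or.inr rfl
        · exact Or.inl ⟨t, rfl⟩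
      have hcl := mem_closure_of_dep_triple hpair hdep
      exact clW_trans _ _ _ _ (M.mem_closure_of_mem (by simp [hWdef]) hWE) hV hcl
  have hC : ∀ t : ZMod p, f (C t) ∈ M.closure W := by
    intro t
    by_cases ht : t = 0
    · subst ht
      exact M.mem_closure_of_mem (by simp [hWdef]) hWE
    · have hpair : M.Indep {f (C 0), f V} :=
        pairIndep _ _ (fun h => by cases h)
      have hdep : M.Dep {f (C 0), f V, f (C t)} := by
        refine depTriple _ _ _ (fun h => by cases h)
          (fun h => ht (LpPoint.C.inj h).symm) (fun h => by cases h)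
          ⟨{x | ∃ i, x = C i} ∪ {V}, Or.inr (Or.inr (Or.inl rfl)), ?_⟩
        rintro x (rfl | rfl | rfl)
        · exact Or.inl ⟨0, rfl⟩
        · exact Or.inr rfl
        · exact Or.inl ⟨t, rfl⟩
      have hcl := mem_closure_of_dep_triple hpair hdep
      exact clW_trans _ _ _ _ (M.mem_closure_of_mem (by simp [hWdef]) hWE) hV hcl
  have hB : ∀ a b : ZMod p, f (B (a + b)) ∈ M.closure W := by
    intro a b
    have hpair : M.Indep {f (A a), f (C b)} :=
      pairIndep _ _ (fun h => by cases h)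
    have hdep : M.Dep {f (A a), f (C b), f (B (a + b))} := by
      refine depTriple _ _ _ (fun h => by cases h)
        (fun h => by cases h) (fun h => by cases h)
        ⟨{A a, B (a + b), C b}, Or.inr (Or.inr (Or.inr ⟨a, b, rfl⟩)), ?_⟩
      rintro x (rfl | rfl | rfl)
      · exact Or.inl rfl
      · exact Or.inr (Or.inr rfl)
      · exact Or.inr (Or.inl rfl)
    exact clW_trans _ _ _ _ (hA a) (hC b) (mem_closure_of_dep_triple hpair hdep)
  have himgE : ∀ S : Set (LpPoint p), f '' S ⊆ M.E := by
    rintro S x ⟨u, -, rfl⟩; exact hfE u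
  have hgW : ∀ s : ZMod p, g s k ∈ M.closure W := by
    intro s
    have h3 := hg.2.2.1 k 0 s
    have hmem : g s k ∈ ⋂ t : ZMod p, lineJI M f (s + k * t) (0 + t) := by
      rw [h3]; simp
    have hmem0 : g s k ∈ lineJI M f s 0 := by
      have h0 := Set.mem_iInter.mp hmem 0
      simpa using h0
    have hgE : g s k ∈ M.E :=
      M.closure_subset_ground _ (hCl_subset_closure M (himgE _) hmem0)
    have hcol : Collin M {f (A 0), f (C s), g s k} := by
      have hc := hg.2.2.2 k 0 s 0
      simpa using hc
    have hcl := mem_closure_of_collin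
      (fun h : f (A 0) = f (C s) => by cases hf.1 h)
      (pairIndep _ _ (fun h => by cases h)) hgE hcol
    exact clW_trans _ _ _ _ (hA 0) (hC s) hcl
  have hT_cl : (f '' {A i, B (i + j), C j} : Set α) ⊆ M.closure W := by
    rintro x ⟨u, hu, rfl⟩
    rcases hu with rfl | rfl | rfl
    · exact hA i
    · exact hB i j
    · exact hC j
  have hU : lineJI M f j i ∪ ({x | ∃ t : ZMod p, x = g t k} ∪ {f V}) ⊆ M.closure W := by
    refine Set.union_subset ?_ (Set.union_subset ?_ ?_)
    · exact (hCl_subset_closure M (himgE _)).trans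
        (M.closure_subset_closure_of_subset_closure hT_cl)
    · rintro x ⟨t, rfl⟩; exact hgW t
    · rintro x rfl; exact hV
  have hub : eRk M (lineJI M f j i ∪ ({x | ∃ t : ZMod p, x = g t k} ∪ {f V})) ≤ 3 := by
    refine (eRk_le_of_subset_closure hWE hU).trans ?_
    calc W.encard ≤ ({f (C 0), f V} : Set α).encard + 1 := Set.encard_insert_le _ _
      _ ≤ (({f V} : Set α).encard + 1) + 1 :=
          add_le_add_left (Set.encard_insert_le _ _) 1
      _ = 3 := by rw [Set.encard_singleton]; rfl
  have hIndep : M.Indep {f (A i), f (B (i + j)), f V} := by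
    have hLp : LpIndep p {A i, B (i + j), V} := by
      refine Or.inr ⟨?_, ?_⟩
      · rw [Set.encard_insert_of_notMem (by simp), Set.encard_pair (by simp)]; rfl
      · rintro L (rfl | rfl | rfl | ⟨i', j', rfl⟩) hsub
        · simpa using hsub (show B (i + j) ∈ ({A i, B (i + j), V} : Set (LpPoint p))
            from by simp)
        · simpa using hsub (show A i ∈ ({A i, B (i + j), V} : Set (LpPoint p))
            from by simp)
        · simpa using hsub (show A i ∈ ({A i, B (i + j), V} : Set (LpPoint p))
            from by simp)
        · simpa using hsub (show V ∈ ({A i, B (i + j), V} : Set (LpPoint p))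
            from by simp)
    have himg := (hf.2.2 _).mp hLp
    rwa [Set.image_insert_eq, Set.image_insert_eq, Set.image_singleton] at himg
  have hlow : (3 : ℕ∞) ≤
      eRk M (lineJI M f j i ∪ ({x | ∃ t : ZMod p, x = g t k} ∪ {f V})) := by
    have hsubU : ({f (A i), f (B (i + j)), f V} : Set α) ⊆
        lineJI M f j i ∪ ({x | ∃ t : ZMod p, x = g t k} ∪ {f V}) := by
      rintro x (rfl | rfl | rfl)
      · exact Set.mem_union_left _ (subset_hCl M _ ⟨A i, by simp, rfl⟩)
      · exact Set.mem_union_left _ (subset_hCl M _ ⟨B (i + j), by simp, rfl⟩)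
      · exact Set.mem_union_right _ (Set.mem_union_right _ rfl)
    have hcard : ({f (A i), f (B (i + j)), f V} : Set α).encard = 3 := by
      have hne1 : f (B (i + j)) ≠ f V := fun h => by cases hf.1 h
      have hnm : f (A i) ∉ ({f (B (i + j)), f V} : Set α) := by
        intro hmem
        rcases hmem with h | h <;> exact by cases hf.1 h
      rw [Set.encard_insert_of_notMem hnm, Set.encard_pair hne1]; rfl
    rw [← hcard]
    exact le_eRk_of_indep hIndep hsubU
  exact le_antisymm hub hlow


end HarmonicPaper
end

section
/- Let p be an odd prime and suppose L_p is embedded in a harmonic matroid M. If (j,i) ≠ (s,t) for i,j,s,t ∈ Z_p, then C(j,i) ≠ C(s,t), and C(j,i) and C(s,t) intersect in exactly one point. -/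
open Set

namespace HarmonicPaper
open LpPoint

variable {α : Type*}

/-! ### Basic rank facts derived from `eRk` and mathlib's matroid API -/

lemma collin_encard_le {M : Matroid α} {S J : Set α} (hS : Collin M S) (hJ : M.Indep J)
    (hJS : J ⊆ S) : J.encard ≤ 2 := by
  refine le_trans ?_ hS
  exact le_iSup₂_of_le J ⟨hJ, hJS⟩ le_rfl

lemma encard_le_of_subset_closure {M : Matroid α} {I J : Set α} (hI : M.Indep I)
    (hJ : M.Indep J) (hJI : J ⊆ M.closure I) : J.encard ≤ I.encard := by
  obtain ⟨J', hJ', hsub⟩ := hJ.subset_isBasis_of_subset hJI (M.closure_subset_ground I)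
  exact (Set.encard_le_encard hsub).trans (hJ'.encard_eq_encard hI.isBasis_closure).le

lemma encard_triple {a b c : α} (hab : a ≠ b) (hac : a ≠ c) (hbc : b ≠ c) :
    ({a, b, c} : Set α).encard = 3 := by
  rw [Set.encard_insert_of_notMem (by simp [hab, hac]), Set.encard_pair hbc]
  rfl

lemma collin_closure {M : Matroid α} {u x v : α} (hux : M.Indep {u, x}) (hne : u ≠ x)
    (hvE : v ∈ M.E) (hcol : Collin M {u, v, x}) : v ∈ M.closure {u, x} := by
  by_cases hv : v ∈ ({u, x} : Set α)
  · exact M.mem_closure_of_mem' hv hvE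
  have hdep : ¬ M.Indep (insert v {u, x}) := by
    intro hind
    have h3 : (insert v {u, x} : Set α).encard = 3 := by
      rw [Set.encard_insert_of_notMem hv, Set.encard_pair hne]
      rfl
    have hle := collin_encard_le hcol hind (by
      intro y hy
      simp only [Set.mem_insert_iff, Set.mem_singleton_iff] at hy ⊢
      tauto)
    rw [h3] at hle
    norm_num at hle
  rw [hux.mem_closure_iff_of_notMem hv]
  rw [Matroid.dep_iff]
  exact ⟨hdep, Set.insert_subset hvE hux.subset_ground⟩

/-! ### Consequences of the embedding -/

section Embed

variable {p : ℕ} {M : Matroid α} {f : LpPoint p → α}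

lemma fInj (hf : IsLpEmbedding p M f) {P Q : LpPoint p} (h : P ≠ Q) : f P ≠ f Q :=
  fun he => h (hf.1 he)

lemma indep_single (hf : IsLpEmbedding p M f) (P : LpPoint p) : M.Indep {f P} := by
  have := (hf.2.2 {P}).mp (Or.inl (by simp))
  simpa using this

lemma indep_pair (hf : IsLpEmbedding p M f) (P Q : LpPoint p) : M.Indep {f P, f Q} := by
  have h : LpIndep p {P, Q} := by
    left
    calc ({P, Q} : Set (LpPoint p)).encard ≤ ({Q} : Set (LpPoint p)).encard + 1 :=
      Set.encard_insert_le _ _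
    _ ≤ 2 := by rw [Set.encard_singleton]; norm_num
  have := (hf.2.2 {P, Q}).mp h
  simpa [Set.image_insert_eq] using this

lemma lp_triple_ACC {i j₁ j₂ : ZMod p} (hj : j₁ ≠ j₂) :
    LpIndep p {A i, C j₁, C j₂} := by
  refine Or.inr ⟨?_, ?_⟩
  · exact encard_triple (by simp) (by simp) (by simp [hj])
  · rintro L hL hsub
    obtain h | h | h | ⟨i', j', rfl⟩ := hL
    · have := hsub (show (C j₁ : LpPoint p) ∈ _ by simp)
      rw [h] at this; simp at this
    · have := hsub (show (C j₁ : LpPoint p) ∈ _ by simp)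
      rw [h] at this; simp at this
    · have := hsub (show (A i : LpPoint p) ∈ _ by simp)
      rw [h] at this; simp at this
    · have h1 := hsub (show (C j₁ : LpPoint p) ∈ _ by simp)
      have h2 := hsub (show (C j₂ : LpPoint p) ∈ _ by simp)
      simp only [Set.mem_insert_iff, Set.mem_singleton_iff] at h1 h2
      simp at h1 h2
      exact hj (h1.trans h2.symm)

lemma lp_triple_AAC {i₁ i₂ j : ZMod p} (hi : i₁ ≠ i₂) :
    LpIndep p {A i₁, A i₂, C j} := by
  refine Or.inr ⟨?_, ?_⟩
  · exact encard_triple (by simp [hi]) (by simp) (by simp)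
  · rintro L hL hsub
    obtain h | h | h | ⟨i', j', rfl⟩ := hL
    · have := hsub (show (C j : LpPoint p) ∈ _ by simp)
      rw [h] at this; simp at this
    · have := hsub (show (A i₁ : LpPoint p) ∈ _ by simp)
      rw [h] at this; simp at this
    · have := hsub (show (A i₁ : LpPoint p) ∈ _ by simp)
      rw [h] at this; simp at this
    · have h1 := hsub (show (A i₁ : LpPoint p) ∈ _ by simp)
      have h2 := hsub (show (A i₂ : LpPoint p) ∈ _ by simp)
      simp at h1 h2
      exact hi (h1.trans h2.symm)

lemma indep_image_triple (hf : IsLpEmbedding p M f) {P Q R : LpPoint p}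
    (h : LpIndep p {P, Q, R}) : M.Indep {f P, f Q, f R} := by
  have := (hf.2.2 {P, Q, R}).mp h
  simpa [Set.image_insert_eq] using this

end Embed

/-! ### Harmonic closure lemmas -/

lemma hIter_subset_ground {M : Matroid α} {S : Set α} (hS : S ⊆ M.E) :
    ∀ n, hIter M n S ⊆ M.E
  | 0 => hS
  | n + 1 => by
    rintro x (hx | hx)
    · exact hIter_subset_ground hS n hx
    · obtain ⟨a, _, b, _, c, _, o, q, r, s, _, heq⟩ := hx
      have hx' : x ∈ M.closure {a, c} ∩ M.closure {o, r} := by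
        rw [heq]; exact rfl
      exact M.closure_subset_ground _ hx'.1

lemma hCl_subset_ground {M : Matroid α} {S : Set α} (hS : S ⊆ M.E) : hCl M S ⊆ M.E :=
  Set.iUnion_subset fun n => hIter_subset_ground hS n

lemma hIter_subset_union_of_loop {M : Matroid α} {ℓ : α} (hℓ : ℓ ∈ M.closure ∅) (S : Set α) :
    ∀ n, hIter M n S ⊆ S ∪ {ℓ}
  | 0 => Set.subset_union_left
  | n + 1 => by
    rintro x (hx | hx)
    · exact hIter_subset_union_of_loop hℓ S n hx
    · obtain ⟨a, _, b, _, c, _, o, q, r, s, _, heq⟩ := hx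
      have h1 : ℓ ∈ M.closure {a, c} := M.closure_subset_closure (Set.empty_subset _) hℓ
      have h2 : ℓ ∈ M.closure {o, r} := M.closure_subset_closure (Set.empty_subset _) hℓ
      have hmem : ℓ ∈ ({x} : Set α) := by rw [← heq]; exact ⟨h1, h2⟩
      right
      simp only [Set.mem_singleton_iff] at hmem ⊢
      exact hmem.symm

lemma hCl_subset_union_of_loop {M : Matroid α} {ℓ : α} (hℓ : ℓ ∈ M.closure ∅) (S : Set α) :
    hCl M S ⊆ S ∪ {ℓ} :=
  Set.iUnion_subset fun n => hIter_subset_union_of_loop hℓ S n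

/-! ### Consequences of the key family -/

section Key

variable {p : ℕ} [Fact p.Prime] {M : Matroid α} {f : LpPoint p → α} {g : ZMod p → ZMod p → α}

lemma g_mem_line (hg : IsKeyFamily M f g) (a k t : ZMod p) :
    g a k ∈ lineJI M f (a + k * t) t := by
  have h := hg.2.2.1 k 0 a
  have hmem : g a k ∈ ⋂ t : ZMod p, lineJI M f (a + k * t) (0 + t) := by
    rw [h]
    simp
  have := Set.mem_iInter.mp hmem t
  simpa using this

lemma collin_g (hg : IsKeyFamily M f g) (a k i : ZMod p) :
    Collin M {f (A i), f (C (a + k * i)), g a k} := by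
  have h := hg.2.2.2 k i (a + k * i) 0
  simpa using h

lemma g_mem_ground (hf : IsLpEmbedding p M f) (hg : IsKeyFamily M f g) (a k : ZMod p) :
    g a k ∈ M.E := by
  have hmem := g_mem_line hg a k 0
  rw [lineJI] at hmem
  exact hCl_subset_ground ((Set.image_subset_range f _).trans hf.2.1) hmem

lemma two_ne_zero' (hodd : p ≠ 2) : (2 : ZMod p) ≠ 0 := by
  intro h
  have h2 : ((2 : ℕ) : ZMod p) = 0 := by push_cast; exact h
  rw [ZMod.natCast_eq_zero_iff] at h2
  have hp : p.Prime := Fact.out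
  rcases (Nat.prime_dvd_prime_iff_eq hp Nat.prime_two).mp h2 with h
  exact hodd h

/-- The matroid `M` has no loops. -/
lemma no_loops (hodd : p ≠ 2) (hf : IsLpEmbedding p M f) (hg : IsKeyFamily M f g)
    {ℓ : α} (hℓ : ℓ ∈ M.closure ∅) : False := by
  have h2 : (2 : ZMod p) ≠ 0 := two_ne_zero' hodd
  -- step 1 : every `g c 1` equals `ℓ`
  have hgc1 : ∀ c : ZMod p, g c 1 = ℓ := by
    intro c
    have hm0 : g c 1 ∈ lineJI M f c 0 := by
      have := g_mem_line hg c 1 0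
      simpa using this
    have hm1 : g c 1 ∈ lineJI M f (c + 1) 1 := by
      have := g_mem_line hg c 1 1
      simpa using this
    rw [lineJI] at hm0 hm1
    have h0 := hCl_subset_union_of_loop hℓ _ hm0
    have h1 := hCl_subset_union_of_loop hℓ _ hm1
    rcases h0 with h0 | h0; swap
    · simpa using h0
    rcases h1 with h1 | h1; swap
    · simpa using h1
    exfalso
    obtain ⟨P, hP, hPe⟩ := h0
    obtain ⟨Q, hQ, hQe⟩ := h1
    obtain rfl : P = Q := hf.1 (hPe.trans hQe.symm)
    simp only [Set.mem_insert_iff, Set.mem_singleton_iff] at hP hQ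
    rcases hP with rfl | rfl | rfl
    · rcases hQ with h' | h' | h'
      · rw [A.injEq] at h'
        exact one_ne_zero h'.symm
      · exact absurd h' (by simp)
      · exact absurd h' (by simp)
    · rcases hQ with h' | h' | h'
      · exact absurd h' (by simp)
      · rw [B.injEq] at h'
        exact h2 (by linear_combination -h')
      · exact absurd h' (by simp)
    · rcases hQ with h' | h' | h'
      · exact absurd h' (by simp)
      · exact absurd h' (by simp)
      · rw [C.injEq] at h'
        exact one_ne_zero (by linear_combination -h')
  -- step 2 : `ℓ` lies on every line
  have hall : ∀ J I : ZMod p, ℓ ∈ lineJI M f J I := by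
    intro J I
    have h := hg.2.2.1 1 0 (J - I)
    have hmem : ℓ ∈ ⋂ t : ZMod p, lineJI M f (J - I + 1 * t) (0 + t) := by
      rw [h]
      simp [hgc1]
    have := Set.mem_iInter.mp hmem I
    have harg : J - I + 1 * I = J := by ring
    rw [harg, zero_add] at this
    exact this
  -- step 3 : `ℓ = f (B 0)`
  have hB : ℓ = f (B 0) := by
    have h := hg.2.2.1 (-1) 0 0
    have hmem : ℓ ∈ ⋂ t : ZMod p, lineJI M f (0 + (-1) * t) (0 + t) :=
      Set.mem_iInter.mpr fun t => hall _ _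
    rw [h] at hmem
    simp only [Set.mem_singleton_iff] at hmem
    rw [hmem]
    have : (0 : ZMod p) - (-1) * 0 = 0 := by ring
    rw [this, hg.2.1]
  -- step 4 : contradiction since `f (B 0)` is independent
  have hind : M.Indep {f (B 0)} := indep_single hf (B 0)
  rw [hB] at hℓ
  have := (M.empty_indep.mem_closure_iff).mp hℓ
  rcases this with hdep | hmem
  · exact hdep.not_indep (by simpa using hind)
  · exact hmem

lemma g_indep (hodd : p ≠ 2) (hf : IsLpEmbedding p M f) (hg : IsKeyFamily M f g)
    (a k : ZMod p) : M.Indep {g a k} := by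
  have hE := g_mem_ground hf hg a k
  have hni : g a k ∉ M.closure ∅ := fun h => no_loops hodd hf hg h
  have h := (M.empty_indep.insert_indep_iff_of_notMem (Set.notMem_empty _)).mpr
    ⟨hE, hni⟩
  simpa using h

/-- Property (II): `g`-points never coincide with `A`-points. -/
lemma g_ne_fA (hf : IsLpEmbedding p M f) (hg : IsKeyFamily M f g) (a k i : ZMod p) :
    g a k ≠ f (A i) := by
  intro h
  have hcol := collin_g hg a k (i + 1)
  rw [h] at hcol
  have hne : (i + 1 : ZMod p) ≠ i := by
    intro h'
    exact one_ne_zero (by linear_combination h' : (1 : ZMod p) = 0)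
  have hind : M.Indep {f (A (i + 1)), f (A i), f (C (a + k * (i + 1)))} :=
    indep_image_triple hf (lp_triple_AAC hne)
  have hsub : ({f (A (i + 1)), f (A i), f (C (a + k * (i + 1)))} : Set α) ⊆
      {f (A (i + 1)), f (C (a + k * (i + 1))), f (A i)} := by
    intro y hy
    simp only [Set.mem_insert_iff, Set.mem_singleton_iff] at hy ⊢
    tauto
  have hle := collin_encard_le hcol hind hsub
  have h3 : ({f (A (i + 1)), f (A i), f (C (a + k * (i + 1)))} : Set α).encard = 3 :=
    encard_triple (fInj hf (by simp [hne])) (fInj hf (by simp)) (fInj hf (by simp))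
  rw [h3] at hle
  norm_num at hle

/-- Property (I): the family `g` is injective. -/
lemma g_injective (hodd : p ≠ 2) (hf : IsLpEmbedding p M f) (hg : IsKeyFamily M f g)
    {a k b k' : ZMod p} (h : g a k = g b k') : a = b ∧ k = k' := by
  by_contra hcon
  set x := g a k with hx
  have hxI : M.Indep {x} := g_indep hodd hf hg a k
  have hxE : x ∈ M.E := g_mem_ground hf hg a k
  -- at most one index can fail the slope condition
  have hP2 : ∀ i₁ i₂ : ZMod p, i₁ ≠ i₂ → a + k * i₁ = b + k' * i₁ →
      a + k * i₂ ≠ b + k' * i₂ := by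
    intro i₁ i₂ hne e₁ e₂
    have hkk : (k - k') * (i₁ - i₂) = 0 := by linear_combination e₁ - e₂
    rcases mul_eq_zero.mp hkk with h' | h'
    · have hk : k = k' := by linear_combination h'
      have ha : a = b := by
        have := e₁
        rw [hk] at this
        linear_combination this
      exact hcon ⟨ha, hk⟩
    · exact (sub_ne_zero.mpr hne) h'
  -- at most one index can be "parallel" to x
  have hQ2 : ∀ i₁ i₂ : ZMod p, i₁ ≠ i₂ → ¬ M.Indep {f (A i₁), x} →
      M.Indep {f (A i₂), x} := by
    intro i₁ i₂ hne h1 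
    by_contra h2
    have hmemcl : ∀ i : ZMod p, ¬ M.Indep {f (A i), x} → f (A i) ∈ M.closure {x} := by
      intro i hdep
      have hnm : f (A i) ∉ ({x} : Set α) := by
        simp only [Set.mem_singleton_iff]
        exact fun h' => g_ne_fA hf hg a k i h'.symm
      rw [hxI.mem_closure_iff_of_notMem hnm, Matroid.dep_iff]
      refine ⟨by rwa [Set.insert_eq] at hdep ⊢, ?_⟩
      exact Set.insert_subset (hf.2.1 (Set.mem_range_self _)) hxI.subset_ground
    have hc1 := hmemcl i₁ h1
    have hc2 := hmemcl i₂ h2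
    have hpair : M.Indep {f (A i₁), f (A i₂)} := indep_pair hf _ _
    have hsub : ({f (A i₁), f (A i₂)} : Set α) ⊆ M.closure {x} :=
      Set.insert_subset hc1 (Set.singleton_subset_iff.mpr hc2)
    have hle := encard_le_of_subset_closure hxI hpair hsub
    rw [Set.encard_pair (fInj hf (by simp [hne])), Set.encard_singleton] at hle
    norm_num at hle
  -- pick a good index i among 0, 1, 2
  have h2Z : (2 : ZMod p) ≠ 0 := two_ne_zero' hodd
  have h01 : (0 : ZMod p) ≠ 1 := fun h' => one_ne_zero h'.symm
  have h02 : (0 : ZMod p) ≠ 2 := fun h' => h2Z h'.symm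
  have h12 : (1 : ZMod p) ≠ 2 := by
    intro h'
    exact one_ne_zero (by linear_combination -h' : (1 : ZMod p) = 0)
  obtain ⟨i, hPi, hQi⟩ : ∃ i : ZMod p, a + k * i ≠ b + k' * i ∧ M.Indep {f (A i), x} := by
    by_cases hp0 : a + k * 0 = b + k' * 0
    · by_cases hq1 : M.Indep {f (A 1), x}
      · exact ⟨1, hP2 0 1 h01 hp0, hq1⟩
      · exact ⟨2, hP2 0 2 h02 hp0, hQ2 1 2 h12 hq1⟩
    · by_cases hq0 : M.Indep {f (A 0), x}
      · exact ⟨0, hp0, hq0⟩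
      · by_cases hp1 : a + k * 1 = b + k' * 1
        · exact ⟨2, hP2 1 2 h12 hp1, hQ2 0 2 h02 hq0⟩
        · exact ⟨1, hp1, hQ2 0 1 h01 hq0⟩
  -- now derive the contradiction
  have hxfa : f (A i) ≠ x := fun h' => g_ne_fA hf hg a k i h'.symm
  have hv : f (C (a + k * i)) ∈ M.closure {f (A i), x} :=
    collin_closure hQi hxfa (hf.2.1 (Set.mem_range_self _)) (collin_g hg a k i)
  have hw : f (C (b + k' * i)) ∈ M.closure {f (A i), x} := by
    have hcol := collin_g hg b k' i
    rw [← h] at hcol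
    exact collin_closure hQi hxfa (hf.2.1 (Set.mem_range_self _)) hcol
  have hu : f (A i) ∈ M.closure {f (A i), x} :=
    M.mem_closure_of_mem' (Set.mem_insert _ _) (hf.2.1 (Set.mem_range_self _))
  have hT : M.Indep {f (A i), f (C (a + k * i)), f (C (b + k' * i))} :=
    indep_image_triple hf (lp_triple_ACC hPi)
  have hsub : ({f (A i), f (C (a + k * i)), f (C (b + k' * i))} : Set α) ⊆
      M.closure {f (A i), x} :=
    Set.insert_subset hu (Set.insert_subset hv (Set.singleton_subset_iff.mpr hw))
  have hle := encard_le_of_subset_closure hQi hT hsub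
  rw [encard_triple (fInj hf (by simp)) (fInj hf (by simp)) (fInj hf (by simp [hPi])),
    Set.encard_pair hxfa] at hle
  norm_num at hle

end Key

end HarmonicPaper

namespace HarmonicPaper
open LpPoint
theorem statement_10 {α : Type*} (p : ℕ) [Fact p.Prime] (hodd : p ≠ 2)
    (M : Matroid α) (hM : IsHarmonic M) (f : LpPoint p → α) (hf : IsLpEmbedding p M f)
    (g : ZMod p → ZMod p → α) (hg : IsKeyFamily M f g) :
    ∀ i j s t : ZMod p, (j, i) ≠ (s, t) →
      cSet f g j i ≠ cSet f g s t ∧ ∃! x, x ∈ cSet f g j i ∩ cSet f g s t := by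
  intro i j s t hne
  have hmem : ∀ (j' i' : ZMod p) (x : α), x ∈ cSet f g j' i' ↔
      x = f (A i') ∨ ∃ k : ZMod p, x = g (j' - k * i') k := by
    intro j' i' x
    simp [cSet]
  by_cases hit : i = t
  · subst hit
    have hjs : j ≠ s := by
      intro h'
      exact hne (by rw [h'])
    constructor
    · intro hEq
      have hm : g j 0 ∈ cSet f g j i := by
        rw [hmem]
        exact Or.inr ⟨0, by simp⟩
      rw [hEq, hmem] at hm
      rcases hm with hm | ⟨k, hm⟩
      · exact g_ne_fA hf hg j 0 i hm
      · obtain ⟨h1, h2⟩ := g_injective hodd hf hg hm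
        rw [← h2] at h1
        simp only [zero_mul, sub_zero] at h1
        exact hjs h1
    · refine ⟨f (A i), ⟨(hmem _ _ _).mpr (Or.inl rfl), (hmem _ _ _).mpr (Or.inl rfl)⟩, ?_⟩
      rintro y ⟨hy1, hy2⟩
      rw [hmem] at hy1 hy2
      rcases hy1 with hy1 | ⟨k, e1⟩
      · exact hy1
      rcases hy2 with hy2 | ⟨k', e2⟩
      · exact hy2
      exfalso
      obtain ⟨h1, h2⟩ := g_injective hodd hf hg (e1.symm.trans e2)
      rw [← h2] at h1
      have : j = s := by linear_combination h1
      exact hjs this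
  · constructor
    · intro hEq
      have hm : f (A i) ∈ cSet f g j i := (hmem _ _ _).mpr (Or.inl rfl)
      rw [hEq, hmem] at hm
      rcases hm with hm | ⟨k, hm⟩
      · have := hf.1 hm
        simp only [A.injEq] at this
        exact hit this
      · exact g_ne_fA hf hg _ _ _ hm.symm
    · have hd : i - t ≠ 0 := sub_ne_zero.mpr hit
      set k₀ : ZMod p := (j - s) * (i - t)⁻¹ with hk₀def
      have hk₀ : k₀ * (i - t) = j - s := by
        rw [hk₀def, mul_assoc, inv_mul_cancel₀ hd, mul_one]
      have hmem2 : j - k₀ * i = s - k₀ * t := by linear_combination -hk₀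
      refine ⟨g (j - k₀ * i) k₀, ⟨(hmem _ _ _).mpr (Or.inr ⟨k₀, rfl⟩),
        (hmem _ _ _).mpr (Or.inr ⟨k₀, by rw [hmem2]⟩)⟩, ?_⟩
      rintro y ⟨hy1, hy2⟩
      rw [hmem] at hy1 hy2
      rcases hy1 with hy1 | ⟨k, e1⟩
      · rcases hy2 with hy2 | ⟨k', e2⟩
        · exfalso
          have := hf.1 (hy1.symm.trans hy2)
          simp only [A.injEq] at this
          exact hit this
        · exfalso
          exact g_ne_fA hf hg _ _ _ (hy1.symm.trans e2).symm
      · rcases hy2 with hy2 | ⟨k', e2⟩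
        · exfalso
          exact g_ne_fA hf hg _ _ _ (e1.symm.trans hy2)
        · obtain ⟨h1, h2⟩ := g_injective hodd hf hg (e1.symm.trans e2)
          rw [← h2] at h1
          have hkk : k * (i - t) = j - s := by linear_combination -h1
          have hzero : (k - k₀) * (i - t) = 0 := by linear_combination hkk - hk₀
          have hk : k = k₀ := by
            rcases mul_eq_zero.mp hzero with h' | h'
            · exact sub_eq_zero.mp h'
            · exact absurd h' hd
          rw [hk] at e1
          exact e1

end HarmonicPaper
end
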